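/- Let U : ℂ² → ℂ²⊗ℂ² be an isometry which is not a product operator, let η be a positive semidefinite operator on ℂ²⊗ℂ², and set η' = (U† ⊗ 1)(1 ⊗ η)(U ⊗ 1), an operator on ℂ²⊗ℂ². If η' does not have full rank, then η' is a product operator if and only if η is a product operator. -/

import Mathlib

open Matrix
open scoped ComplexOrder

/-- An operator on `ℂ²⊗ℂ²` is a product operator if it is of the form `A ⊗ B`. -/
def IsProdOp (η : Matrix (Fin 2 × Fin 2) (Fin 2 × Fin 2) ℂ) : Prop :=
  ∃ A B : Matrix (Fin 2) (Fin 2) ℂ, ∀ i j k l : Fin 2, η (i, j) (k, l) = A i k * B j l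

/-- An isometry `U : ℂ² → ℂ²⊗ℂ²` is a product operator if `U = A ⊗ |v⟩` or `U = |u⟩ ⊗ A`. -/
def IsProdIsometry (U : Matrix (Fin 2 × Fin 2) (Fin 2) ℂ) : Prop :=
  (∃ (A : Matrix (Fin 2) (Fin 2) ℂ) (v : Fin 2 → ℂ), ∀ i j k : Fin 2, U (i, j) k = A i k * v j) ∨
  (∃ (u : Fin 2 → ℂ) (A : Matrix (Fin 2) (Fin 2) ℂ), ∀ i j k : Fin 2, U (i, j) k = u i * A j k)

open scoped Kronecker


private lemma aux_colrel (M : Matrix (Fin 2 × Fin 2) (Fin 2 × Fin 2) ℂ) (w : Fin 2 → ℂ)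
    (hw : w 0 ≠ 0 ∨ w 1 ≠ 0)
    (hrel : ∀ j r, M j (0, r) * w 0 + M j (1, r) * w 1 = 0) :
    ∃ A B : Matrix (Fin 2) (Fin 2) ℂ, ∀ i j k l : Fin 2,
      (Mᴴ * M) (i, j) (k, l) = A i k * B j l := by
  set t : (Fin 2 × Fin 2) → Fin 2 → ℂ :=
    fun j r => if w 0 = 0 then M j (0, r) / w 1 else -(M j (1, r)) / w 0 with ht
  set s : Fin 2 → ℂ := fun b => if b = 0 then w 1 else -(w 0) with hs
  have hMt : ∀ (j : Fin 2 × Fin 2) (b r : Fin 2), M j (b, r) = t j r * s b := by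
    intro j b r
    by_cases h0 : w 0 = 0
    · have h1 : w 1 ≠ 0 := hw.resolve_left (not_not_intro h0)
      have hz : M j (1, r) = 0 := by
        have h := hrel j r
        rw [h0, mul_zero, zero_add] at h
        exact (mul_eq_zero.mp h).resolve_right h1
      fin_cases b
      · simp only [ht, hs, if_pos h0, Fin.zero_eta, if_pos rfl]
        field_simp
      · simp [ht, hs, h0, hz]
    · have hr := hrel j r
      fin_cases b
      · simp only [ht, hs, if_neg h0, Fin.zero_eta, if_pos rfl]
        field_simp
        linear_combination hr
      · simp only [ht, hs, if_neg h0]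
        norm_num
        field_simp
  refine ⟨fun b d => star (s b) * s d, fun r u => ∑ j : Fin 2 × Fin 2, star (t j r) * t j u, ?_⟩
  intro b r d u
  rw [Matrix.mul_apply, Finset.mul_sum]
  refine Finset.sum_congr rfl fun j _ => ?_
  rw [conjTranspose_apply, hMt j b r, hMt j d u, star_mul']
  ring

private lemma aux_rowrel (M : Matrix (Fin 2 × Fin 2) (Fin 2 × Fin 2) ℂ) (w : Fin 2 → ℂ)
    (hw : w 0 ≠ 0 ∨ w 1 ≠ 0)
    (hrel : ∀ j b, M j (b, 0) * w 0 + M j (b, 1) * w 1 = 0) :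
    ∃ A B : Matrix (Fin 2) (Fin 2) ℂ, ∀ i j k l : Fin 2,
      (Mᴴ * M) (i, j) (k, l) = A i k * B j l := by
  set t : (Fin 2 × Fin 2) → Fin 2 → ℂ :=
    fun j b => if w 0 = 0 then M j (b, 0) / w 1 else -(M j (b, 1)) / w 0 with ht
  set s : Fin 2 → ℂ := fun r => if r = 0 then w 1 else -(w 0) with hs
  have hMt : ∀ (j : Fin 2 × Fin 2) (b r : Fin 2), M j (b, r) = t j b * s r := by
    intro j b r
    by_cases h0 : w 0 = 0
    · have h1 : w 1 ≠ 0 := hw.resolve_left (not_not_intro h0)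
      have hz : M j (b, 1) = 0 := by
        have h := hrel j b
        rw [h0, mul_zero, zero_add] at h
        exact (mul_eq_zero.mp h).resolve_right h1
      fin_cases r
      · simp only [ht, hs, if_pos h0, Fin.zero_eta, if_pos rfl]
        field_simp
      · simp [ht, hs, h0, hz]
    · have hr := hrel j b
      fin_cases r
      · simp only [ht, hs, if_neg h0, Fin.zero_eta, if_pos rfl]
        field_simp
        linear_combination hr
      · simp only [ht, hs, if_neg h0]
        norm_num
        field_simp
  refine ⟨fun b d => ∑ j : Fin 2 × Fin 2, star (t j b) * t j d, fun r u => star (s r) * s u, ?_⟩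
  intro b r d u
  rw [Matrix.mul_apply, Finset.sum_mul]
  refine Finset.sum_congr rfl fun j _ => ?_
  rw [conjTranspose_apply, hMt j b r, hMt j d u, star_mul']
  ring

private lemma aux_key (U : Matrix (Fin 2 × Fin 2) (Fin 2) ℂ)
    (M : Matrix (Fin 2 × Fin 2) (Fin 2 × Fin 2) ℂ)
    (η' : Matrix (Fin 2 × Fin 2) (Fin 2 × Fin 2) ℂ)
    (hη' : ∀ p r q s : Fin 2, η' (p, r) (q, s) =
      ∑ a : Fin 2, ∑ b : Fin 2, ∑ d : Fin 2,
        star (U (a, b) p) * (Mᴴ * M) (b, r) (d, s) * U (a, d) q)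
    (x : Fin 2 × Fin 2 → ℂ) (hx : η' *ᵥ x = 0) (a : Fin 2) :
    M *ᵥ (fun br => ∑ p : Fin 2, U (a, br.1) p * x (p, br.2)) = 0 := by
  set y : Fin 2 → (Fin 2 × Fin 2 → ℂ) :=
    fun a' br => ∑ p : Fin 2, U (a', br.1) p * x (p, br.2) with hy
  have h2 : ∀ a', star (M *ᵥ y a') ⬝ᵥ (M *ᵥ y a')
      = star (y a') ⬝ᵥ ((Mᴴ * M) *ᵥ y a') := by
    intro a'
    rw [star_mulVec, ← dotProduct_mulVec, mulVec_mulVec]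
  have hsum : ∑ a' : Fin 2, star (M *ᵥ y a') ⬝ᵥ (M *ᵥ y a') = 0 := by
    have h3 : ∑ a' : Fin 2, star (y a') ⬝ᵥ ((Mᴴ * M) *ᵥ y a') = star x ⬝ᵥ (η' *ᵥ x) := by
      simp only [hy, Matrix.mulVec, dotProduct, Fintype.sum_prod_type, Fin.sum_univ_two,
        hη', Pi.star_apply, star_add, star_mul']
      ring
    rw [hx, dotProduct_zero] at h3
    simpa only [h2] using h3
  rw [Fin.sum_univ_two] at hsum
  have hz := (add_eq_zero_iff_of_nonneg (dotProduct_star_self_nonneg _)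
    (dotProduct_star_self_nonneg _)).mp hsum
  have hza : star (M *ᵥ y a) ⬝ᵥ (M *ᵥ y a) = 0 := by
    fin_cases a
    · exact hz.1
    · exact hz.2
  exact dotProduct_star_self_eq_zero.mp hza

/-- Let `U : ℂ² → ℂ²⊗ℂ²` be an isometry which is not a product operator, `η ≥ 0` on
`ℂ²⊗ℂ²`, and `η' = (U† ⊗ 1)(1 ⊗ η)(U ⊗ 1)` (where `U` produces qubits 1, 2, `η` acts
on qubits 2, 3).  If `η'` is not of full rank, then `η'` is a product operator iff `η` is. -/
theorem stmt2 (U : Matrix (Fin 2 × Fin 2) (Fin 2) ℂ)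
    (hU : Uᴴ * U = 1) (hUnp : ¬ IsProdIsometry U)
    (η : Matrix (Fin 2 × Fin 2) (Fin 2 × Fin 2) ℂ) (hη : η.PosSemidef)
    (η' : Matrix (Fin 2 × Fin 2) (Fin 2 × Fin 2) ℂ)
    (hη' : ∀ p r q s : Fin 2, η' (p, r) (q, s) =
      ∑ a : Fin 2, ∑ b : Fin 2, ∑ d : Fin 2,
        star (U (a, b) p) * η (b, r) (d, s) * U (a, d) q)
    (hrank : η'.rank < 4) :
    IsProdOp η' ↔ IsProdOp η := by
  obtain ⟨M, hM⟩ : ∃ M : Matrix (Fin 2 × Fin 2) (Fin 2 × Fin 2) ℂ, η = Mᴴ * M := by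
    open scoped MatrixOrder in
    exact CStarAlgebra.nonneg_iff_eq_star_mul_self.mp hη.nonneg
  subst hM
  constructor
  · rintro ⟨A', B', hAB'⟩
    have hdet : A'.det = 0 ∨ B'.det = 0 := by
      by_contra hc
      push_neg at hc
      have hkron : η' = A' ⊗ₖ B' := by
        ext ⟨i, j⟩ ⟨k, l⟩
        simpa [Matrix.kroneckerMap_apply] using hAB' i j k l
      have hu : IsUnit η' := by
        rw [Matrix.isUnit_iff_isUnit_det, hkron, Matrix.det_kronecker]
        exact (hc.1.isUnit.pow _).mul (hc.2.isUnit.pow _)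
      have h4 := Matrix.rank_of_isUnit η' hu
      simp [h4] at hrank
    rcases hdet with hdA | hdB
    · -- A' singular
      obtain ⟨u', hu'ne, hu'⟩ := Matrix.exists_mulVec_eq_zero_iff.mpr hdA
      set w : Fin 2 → Fin 2 → ℂ := fun a b => ∑ p : Fin 2, U (a, b) p * u' p with hw
      have hker : ∀ (c : Fin 2 → ℂ) (a : Fin 2),
          M *ᵥ (fun br => w a br.1 * c br.2) = 0 := by
        intro c a
        have hx : η' *ᵥ (fun pr : Fin 2 × Fin 2 => u' pr.1 * c pr.2) = 0 := by
          funext pr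
          obtain ⟨p, r⟩ := pr
          have h1 : A' p 0 * u' 0 + A' p 1 * u' 1 = 0 := by
            have h := congrFun hu' p
            simpa [Matrix.mulVec, dotProduct, Fin.sum_univ_two] using h
          simp only [Matrix.mulVec, dotProduct, Fintype.sum_prod_type, Fin.sum_univ_two,
            Pi.zero_apply]
          simp only [hAB']
          linear_combination (B' r 0 * c 0 + B' r 1 * c 1) * h1
        have hk := aux_key U M η' hη' _ hx a
        have heq : (fun br : Fin 2 × Fin 2 => w a br.1 * c br.2)
            = fun br : Fin 2 × Fin 2 => ∑ p : Fin 2, U (a, br.1) p * (u' p * c br.2) := by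
          funext br
          simp only [hw, Finset.sum_mul, Fin.sum_univ_two]
          ring
        rw [heq]
        exact hk
      have hexw : ∃ a b, w a b ≠ 0 := by
        by_contra hall
        push_neg at hall
        have h2 : star u' ⬝ᵥ ((Uᴴ * U) *ᵥ u') = ∑ a : Fin 2, ∑ b : Fin 2, star (w a b) * w a b := by
          simp only [hw, Matrix.mulVec, Matrix.mul_apply, dotProduct, conjTranspose_apply,
            Fintype.sum_prod_type, Fin.sum_univ_two, star_add, star_mul', Pi.star_apply]
          ring
        rw [hU, one_mulVec] at h2
        refine hu'ne (dotProduct_star_self_eq_zero.mp ?_)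
        rw [h2]
        simp [hall]
      obtain ⟨a₀, b₀, hwb⟩ := hexw
      have hwnz : w a₀ 0 ≠ 0 ∨ w a₀ 1 ≠ 0 := by
        fin_cases b₀
        · exact Or.inl hwb
        · exact Or.inr hwb
      have hrel : ∀ j r, M j (0, r) * w a₀ 0 + M j (1, r) * w a₀ 1 = 0 := by
        intro j r
        fin_cases r
        · show M j (0, 0) * w a₀ 0 + M j (1, 0) * w a₀ 1 = 0
          have h := congrFun (hker (fun u => if u = 0 then 1 else 0) a₀) j
          simp only [Matrix.mulVec, dotProduct, Fintype.sum_prod_type, Fin.sum_univ_two,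
            Pi.zero_apply] at h
          simp [-Prod.mk_zero_zero] at h
          linear_combination h
        · show M j (0, 1) * w a₀ 0 + M j (1, 1) * w a₀ 1 = 0
          have h := congrFun (hker (fun u => if u = 1 then 1 else 0) a₀) j
          simp only [Matrix.mulVec, dotProduct, Fintype.sum_prod_type, Fin.sum_univ_two,
            Pi.zero_apply] at h
          simp [-Prod.mk_zero_zero] at h
          linear_combination h
      exact aux_colrel M (w a₀) hwnz hrel
    · -- B' singular
      obtain ⟨w'', hwne, hwv⟩ := Matrix.exists_mulVec_eq_zero_iff.mpr hdB
      have h1 : ∀ r, B' r 0 * w'' 0 + B' r 1 * w'' 1 = 0 := by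
        intro r
        have h := congrFun hwv r
        simpa [Matrix.mulVec, dotProduct, Fin.sum_univ_two] using h
      have hker : ∀ a p, M *ᵥ (fun br : Fin 2 × Fin 2 => U (a, br.1) p * w'' br.2) = 0 := by
        intro a p
        fin_cases p
        · show (M *ᵥ fun br : Fin 2 × Fin 2 => U (a, br.1) (0 : Fin 2) * w'' br.2) = 0
          have hx : η' *ᵥ (fun qs : Fin 2 × Fin 2 => (if qs.1 = 0 then (1:ℂ) else 0) * w'' qs.2) = 0 := by
            funext pr
            obtain ⟨p', r⟩ := pr
            simp only [Matrix.mulVec, dotProduct, Fintype.sum_prod_type, Fin.sum_univ_two,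
              Pi.zero_apply]
            simp only [hAB']
            simp
            linear_combination (A' p' 0) * h1 r
          have hk := aux_key U M η' hη' _ hx a
          have heq : (fun br : Fin 2 × Fin 2 => U (a, br.1) 0 * w'' br.2)
              = fun br : Fin 2 × Fin 2 => ∑ q : Fin 2,
                  U (a, br.1) q * ((if q = (0:Fin 2) then (1:ℂ) else 0) * w'' br.2) := by
            funext br
            simp [Fin.sum_univ_two]
          rw [heq]
          exact hk
        · show (M *ᵥ fun br : Fin 2 × Fin 2 => U (a, br.1) (1 : Fin 2) * w'' br.2) = 0
          have hx : η' *ᵥ (fun qs : Fin 2 × Fin 2 => (if qs.1 = 1 then (1:ℂ) else 0) * w'' qs.2) = 0 := by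
            funext pr
            obtain ⟨p', r⟩ := pr
            simp only [Matrix.mulVec, dotProduct, Fintype.sum_prod_type, Fin.sum_univ_two,
              Pi.zero_apply]
            simp only [hAB']
            simp
            linear_combination (A' p' 1) * h1 r
          have hk := aux_key U M η' hη' _ hx a
          have heq : (fun br : Fin 2 × Fin 2 => U (a, br.1) 1 * w'' br.2)
              = fun br : Fin 2 × Fin 2 => ∑ q : Fin 2,
                  U (a, br.1) q * ((if q = (1:Fin 2) then (1:ℂ) else 0) * w'' br.2) := by
            funext br
            simp [Fin.sum_univ_two]
          rw [heq]
          exact hk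
      have hrel2 : ∀ a p (j : Fin 2 × Fin 2),
          U (a, 0) p * (M j (0, 0) * w'' 0 + M j (0, 1) * w'' 1)
          + U (a, 1) p * (M j (1, 0) * w'' 0 + M j (1, 1) * w'' 1) = 0 := by
        intro a p j
        have h := congrFun (hker a p) j
        simp only [Matrix.mulVec, dotProduct, Fintype.sum_prod_type, Fin.sum_univ_two,
          Pi.zero_apply] at h
        linear_combination h
      by_cases hind : ∃ a1 p1 a2 p2,
          U (a1, 0) p1 * U (a2, 1) p2 - U (a1, 1) p1 * U (a2, 0) p2 ≠ 0
      · obtain ⟨a1, p1, a2, p2, hd⟩ := hind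
        have hg : ∀ (j : Fin 2 × Fin 2) (b : Fin 2),
            M j (b, 0) * w'' 0 + M j (b, 1) * w'' 1 = 0 := by
          intro j b
          have e1 := hrel2 a1 p1 j
          have e2 := hrel2 a2 p2 j
          fin_cases b
          · have h0 : (M j (0, 0) * w'' 0 + M j (0, 1) * w'' 1)
                * (U (a1, 0) p1 * U (a2, 1) p2 - U (a1, 1) p1 * U (a2, 0) p2) = 0 := by
              linear_combination U (a2, 1) p2 * e1 - U (a1, 1) p1 * e2
            exact (mul_eq_zero.mp h0).resolve_right hd
          · have h0 : (M j (1, 0) * w'' 0 + M j (1, 1) * w'' 1)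
                * (U (a1, 0) p1 * U (a2, 1) p2 - U (a1, 1) p1 * U (a2, 0) p2) = 0 := by
              linear_combination U (a1, 0) p1 * e2 - U (a2, 0) p2 * e1
            exact (mul_eq_zero.mp h0).resolve_right hd
        refine aux_rowrel M w'' ?_ hg
        by_contra hcc
        push_neg at hcc
        exact hwne (funext fun b => by fin_cases b <;> simp [hcc.1, hcc.2])
      · push_neg at hind
        exfalso
        apply hUnp
        have hUne : ∃ a p b, U (a, b) p ≠ 0 := by
          by_contra hz
          push_neg at hz
          have h00 := congrFun (congrFun hU 0) 0
          simp [Matrix.mul_apply, conjTranspose_apply, Fintype.sum_prod_type,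
            Fin.sum_univ_two, hz, Matrix.one_apply] at h00
        obtain ⟨a0, p0, b0, hV⟩ := hUne
        left
        refine ⟨fun a p => if U (a0, 0) p0 = 0 then U (a, 1) p / U (a0, 1) p0
            else U (a, 0) p / U (a0, 0) p0, fun b => U (a0, b) p0, ?_⟩
        intro a b p
        by_cases h0 : U (a0, 0) p0 = 0
        · have h1 : U (a0, 1) p0 ≠ 0 := by
            fin_cases b0
            · exact absurd h0 hV
            · exact hV
          have hdep := hind a p a0 p0
          rw [h0, mul_zero] at hdep
          have hz0 : U (a, 0) p * U (a0, 1) p0 = 0 := by linear_combination hdep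
          have hz0' : U (a, 0) p = 0 := (mul_eq_zero.mp hz0).resolve_right h1
          fin_cases b
          · show U (a, 0) p = (if U (a0, 0) p0 = 0 then U (a, 1) p / U (a0, 1) p0
              else U (a, 0) p / U (a0, 0) p0) * U (a0, 0) p0
            simp only [if_pos h0]
            rw [hz0', h0, mul_zero]
          · show U (a, 1) p = (if U (a0, 0) p0 = 0 then U (a, 1) p / U (a0, 1) p0
              else U (a, 0) p / U (a0, 0) p0) * U (a0, 1) p0
            simp only [if_pos h0]
            field_simp
        · have hdep := hind a0 p0 a p
          fin_cases b
          · show U (a, 0) p = (if U (a0, 0) p0 = 0 then U (a, 1) p / U (a0, 1) p0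
              else U (a, 0) p / U (a0, 0) p0) * U (a0, 0) p0
            simp only [if_neg h0]
            field_simp
          · show U (a, 1) p = (if U (a0, 0) p0 = 0 then U (a, 1) p / U (a0, 1) p0
              else U (a, 0) p / U (a0, 0) p0) * U (a0, 1) p0
            simp only [if_neg h0]
            field_simp
            linear_combination hdep
  · rintro ⟨A, B, hAB⟩
    refine ⟨fun p q => ∑ a : Fin 2, ∑ b : Fin 2, ∑ d : Fin 2,
      star (U (a, b) p) * A b d * U (a, d) q, B, ?_⟩
    intro i j k l
    rw [hη' i j k l]
    simp only [hAB]
    simp only [Fin.sum_univ_two, Finset.sum_mul]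
    ring
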